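/- Every ⊕-abstraction P' of an AC-MAS P is uniform. -/

import Mathlib

/-!  Common formalisation of artifact-centric multi-agent systems (AC-MAS). -/

open Set

/-- A database schema: a finite type of relation symbols, each with an arity. -/
structure Schema : Type 1 where
  Rel : Type
  [relFin : Fintype Rel]
  arity : Rel → ℕ

attribute [instance] Schema.relFin

/-- A `D`-instance over an interpretation domain `U`: every relation symbol is
interpreted as a finite set of tuples over `U`. -/
structure Inst (D : Schema) (U : Type) : Type where
  rel : ∀ r : D.Rel, Set (Fin (D.arity r) → U)
  finite : ∀ r, (rel r).Finite

/-- The active domain of an instance. -/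
def Inst.adom {D : Schema} {U : Type} (I : Inst D U) : Set U :=
  { u | ∃ (r : D.Rel) (t : Fin (D.arity r) → U), t ∈ I.rel r ∧ ∃ j, t j = u }

/-- The schema `D` together with a primed copy of every relation symbol. -/
def Schema.double (D : Schema) : Schema where
  Rel := D.Rel ⊕ D.Rel
  relFin := inferInstance
  arity := Sum.elim D.arity D.arity

/-- The disjunctive join `I ⊕ J`: unprimed symbols are interpreted as in `I`,
primed symbols as in `J`. -/
def Inst.oplus {D : Schema} {U : Type} (I J : Inst D U) : Inst D.double U where
  rel := fun r => match r with
    | .inl r₀ => I.rel r₀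
    | .inr r₀ => J.rel r₀
  finite := fun r => by
    cases r with
    | inl r₀ => exact I.finite r₀
    | inr r₀ => exact J.finite r₀

/-- Image of an instance under a map of domains. -/
def Inst.map {D : Schema} {C U : Type} (f : C → U) (I : Inst D C) : Inst D U where
  rel := fun r => (fun t => f ∘ t) '' I.rel r
  finite := fun r => (I.finite r).image _

/-! ### First-order formulas -/

/-- Terms: variables (natural numbers) or constants from `C`. -/
abbrev Term (C : Type) := ℕ ⊕ C

def Term.varsF {C : Type} : Term C → Finset ℕ
  | .inl x => {x}
  | .inr _ => ∅

def Term.constsS {C : Type} : Term C → Set C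
  | .inl _ => ∅
  | .inr c => {c}

def Term.val {C U : Type} (cst : C → U) (σ : ℕ → U) : Term C → U
  | .inl x => σ x
  | .inr c => cst c

/-- First-order formulas over schema `D`, with equality, constants from `C`
and no function symbols. -/
inductive FO (D : Schema) (C : Type) : Type where
  | eq : Term C → Term C → FO D C
  | rel : (r : D.Rel) → (Fin (D.arity r) → Term C) → FO D C
  | not : FO D C → FO D C
  | imp : FO D C → FO D C → FO D C
  | all : ℕ → FO D C → FO D C

namespace FO

variable {D : Schema} {C : Type}

/-- Free variables. -/
def free : FO D C → Finset ℕ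
  | .eq t₁ t₂ => t₁.varsF ∪ t₂.varsF
  | .rel _ ts => Finset.univ.biUnion fun j => (ts j).varsF
  | .not φ => φ.free
  | .imp φ ψ => φ.free ∪ ψ.free
  | .all x φ => φ.free.erase x

/-- All variables. -/
def vars : FO D C → Finset ℕ
  | .eq t₁ t₂ => t₁.varsF ∪ t₂.varsF
  | .rel _ ts => Finset.univ.biUnion fun j => (ts j).varsF
  | .not φ => φ.vars
  | .imp φ ψ => φ.vars ∪ ψ.vars
  | .all x φ => insert x φ.vars

/-- Constants mentioned in a formula. -/
def consts : FO D C → Set C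
  | .eq t₁ t₂ => t₁.constsS ∪ t₂.constsS
  | .rel _ ts => ⋃ j, (ts j).constsS
  | .not φ => φ.consts
  | .imp φ ψ => φ.consts ∪ ψ.consts
  | .all _ φ => φ.consts

/-- The formula mentions only relation symbols from `R`. -/
def UsesOnly (R : Set D.Rel) : FO D C → Prop
  | .eq _ _ => True
  | .rel r _ => r ∈ R
  | .not φ => φ.UsesOnly R
  | .imp φ ψ => φ.UsesOnly R ∧ ψ.UsesOnly R
  | .all _ φ => φ.UsesOnly R

/-- Satisfaction of FO-formulas, with active-domain quantification. -/
def sat {U : Type} (cst : C → U) (I : Inst D U) : (ℕ → U) → FO D C → Prop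
  | σ, .eq t₁ t₂ => t₁.val cst σ = t₂.val cst σ
  | σ, .rel r ts => (fun j => (ts j).val cst σ) ∈ I.rel r
  | σ, .not φ => ¬ sat cst I σ φ
  | σ, .imp φ ψ => sat cst I σ φ → sat cst I σ ψ
  | σ, .all x φ => ∀ u ∈ I.adom, sat cst I (Function.update σ x u) φ

end FO

/-! ### Agents and AC-MAS -/

/-- The signature of an agent: a finite set of action types with parameter counts. -/
structure AgentSig : Type 1 where
  Act : Type
  [actFin : Fintype Act]
  np : Act → ℕ

attribute [instance] AgentSig.actFin

/-- A ground action: an action type together with ground parameters. -/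
def GAct (g : AgentSig) (U : Type) : Type := Σ a : g.Act, Fin (g.np a) → U

/-- Renaming of ground-action parameters. -/
def GAct.map {g : AgentSig} {U U' : Type} (f : U → U') : GAct g U → GAct g U'
  | ⟨a, u⟩ => ⟨a, fun j => f (u j)⟩

/-- An agent: local states structured as database instances, and a protocol. -/
structure Agent (D : Schema) (g : AgentSig) (U : Type) : Type where
  L : Set (Inst D U)
  Pr : Inst D U → Set (GAct g U)

/-- A global state: one local database instance per agent `0, …, n`
(agent `0` is the environment). -/
abbrev GState (D : Schema) (n : ℕ) (U : Type) := Fin (n+1) → Inst D U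

/-- A joint (global) ground action. -/
abbrev JAct {n : ℕ} (sig : Fin (n+1) → AgentSig) (U : Type) : Type := ∀ i, GAct (sig i) U

def JAct.map {n : ℕ} {sig : Fin (n+1) → AgentSig} {U U' : Type} (f : U → U')
    (a : JAct sig U) : JAct sig U' := fun i => (a i).map f

/-- The set of individuals occurring as parameters of a joint ground action. -/
def actElems {n : ℕ} {sig : Fin (n+1) → AgentSig} {U : Type} (a : JAct sig U) : Set U :=
  { u | ∃ (i : Fin (n+1)) (j : Fin ((sig i).np (a i).1)), (a i).2 j = u }

/-- Active domain of a family of instances (e.g. a global state). -/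
def adomF {D : Schema} {X U : Type} (s : X → Inst D U) : Set U := ⋃ i, (s i).adom

/-- The global instance `D_s` associated with a global state. -/
def gInst {D : Schema} {n : ℕ} {U : Type} (s : GState D n U) : Inst D U where
  rel := fun r => ⋃ i, (s i).rel r
  finite := fun r => Set.finite_iUnion fun i => (s i).finite r

/-- Componentwise disjunctive join of two global states. -/
def oplusG {D : Schema} {n : ℕ} {U : Type} (s t : GState D n U) : GState D.double n U :=
  fun i => (s i).oplus (t i)

/-- An artifact-centric multi-agent system. -/
structure ACMAS (D : Schema) {n : ℕ} (sig : Fin (n+1) → AgentSig) {U : Type}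
    (Ag : ∀ i, Agent D (sig i) U) : Type where
  /-- set of (reachable) global states -/
  S : Set (GState D n U)
  /-- initial global state -/
  s0 : GState D n U
  s0_mem : s0 ∈ S
  states_local : ∀ s ∈ S, ∀ i, s i ∈ (Ag i).L
  /-- global transition function -/
  τ : GState D n U → JAct sig U → Set (GState D n U)
  /-- `τ` is defined only on protocol-enabled joint actions -/
  tau_enabled : ∀ s a, (τ s a).Nonempty → ∀ i, a i ∈ (Ag i).Pr (s i)
  tau_closed : ∀ s ∈ S, ∀ a, τ s a ⊆ S

namespace ACMAS

variable {D : Schema} {n : ℕ} {sig : Fin (n+1) → AgentSig} {U : Type}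
  {Ag : ∀ i, Agent D (sig i) U}

/-- The transition relation `s → t`. -/
def Tr (M : ACMAS D sig Ag) (s t : GState D n U) : Prop := ∃ a, t ∈ M.τ s a

/-- Epistemic indistinguishability for agent `i`. -/
def Epi (M : ACMAS D sig Ag) (i : Fin (n+1)) (s t : GState D n U) : Prop :=
  s ∈ M.S ∧ t ∈ M.S ∧ s i = t i

/-- Union of the epistemic relations of agents `1, …, n`. -/
def EpiAny (M : ACMAS D sig Ag) (s t : GState D n U) : Prop :=
  ∃ i : Fin n, M.Epi i.succ s t

/-- The standard assumptions: the transition relation is serial and `S` is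
exactly the set of states reachable from `s0`. -/
def Std (M : ACMAS D sig Ag) : Prop :=
  (∀ s ∈ M.S, ∃ t, M.Tr s t) ∧ M.S = { s | Relation.ReflTransGen M.Tr M.s0 s }

/-- An (infinite) run. -/
def IsRun (M : ACMAS D sig Ag) (r : ℕ → GState D n U) : Prop :=
  (∀ k, r k ∈ M.S) ∧ ∀ k, M.Tr (r k) (r (k+1))

/-- A temporal-epistemic run. -/
def IsTERun (M : ACMAS D sig Ag) (r : ℕ → GState D n U) : Prop :=
  (∀ k, r k ∈ M.S) ∧ ∀ k, M.Tr (r k) (r (k+1)) ∨ M.EpiAny (r k) (r (k+1))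

end ACMAS

/-! ### Isomorphisms and equivalent assignments -/

/-- `ι` is a witness for the isomorphism of the families `s` and `s'`:
a constant-preserving bijection between the active domains extended with the
constants, preserving all relations componentwise. -/
def IsWitness {D : Schema} {X C U U' : Type} (cst : C → U) (cst' : C → U')
    (ι : U → U') (s : X → Inst D U) (s' : X → Inst D U') : Prop :=
  Set.BijOn ι (adomF s ∪ Set.range cst) (adomF s' ∪ Set.range cst') ∧
  (∀ c, ι (cst c) = cst' c) ∧
  ∀ (i : X) (r : D.Rel) (t : Fin (D.arity r) → U),
    (∀ j, t j ∈ adomF s ∪ Set.range cst) →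
    (t ∈ (s i).rel r ↔ (fun j => ι (t j)) ∈ (s' i).rel r)

/-- Isomorphism of families of instances (in particular global states). -/
def Iso {D : Schema} {X C U U' : Type} (cst : C → U) (cst' : C → U')
    (s : X → Inst D U) (s' : X → Inst D U') : Prop :=
  ∃ ι, IsWitness cst cst' ι s s'

/-- Equivalent assignments for a set `V` of variables w.r.t. `s` and `s'`. -/
def EqAssign {D : Schema} {n : ℕ} {C U U' : Type} (cst : C → U) (cst' : C → U')
    (V : Set ℕ) (σ : ℕ → U) (σ' : ℕ → U')
    (s : GState D n U) (s' : GState D n U') : Prop :=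
  ∃ γ : U → U',
    Set.BijOn γ (adomF s ∪ Set.range cst ∪ σ '' V)
      (adomF s' ∪ Set.range cst' ∪ σ' '' V) ∧
    IsWitness cst cst' γ s s' ∧
    ∀ x ∈ V, σ' x = γ (σ x)

/-! ### Simulations and bisimulations -/

section Bisim

variable {D : Schema} {n : ℕ} {sig sig' : Fin (n+1) → AgentSig} {C U U' : Type}
  {Ag : ∀ i, Agent D (sig i) U} {Ag' : ∀ i, Agent D (sig' i) U'}

/-- Simulation between two AC-MAS. -/
def IsSim (cst : C → U) (cst' : C → U')
    (M : ACMAS D sig Ag) (M' : ACMAS D sig' Ag')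
    (R : GState D n U → GState D n U' → Prop) : Prop :=
  ∀ s s', R s s' →
    s ∈ M.S ∧ s' ∈ M'.S ∧ Iso cst cst' s s' ∧
    ∀ t, M.Tr s t → ∃ t', M'.Tr s' t' ∧ R t t'

/-- Bisimulation. -/
def IsBisim (cst : C → U) (cst' : C → U')
    (M : ACMAS D sig Ag) (M' : ACMAS D sig' Ag')
    (R : GState D n U → GState D n U' → Prop) : Prop :=
  IsSim cst cst' M M' R ∧ IsSim cst' cst M' M (fun s' s => R s s')

/-- Bisimilarity of states. -/
def Bisimilar (cst : C → U) (cst' : C → U')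
    (M : ACMAS D sig Ag) (M' : ACMAS D sig' Ag')
    (s : GState D n U) (s' : GState D n U') : Prop :=
  ∃ R, IsBisim cst cst' M M' R ∧ R s s'

/-- `P ≈ P'`: the two systems are bisimilar. -/
def BisimSys (cst : C → U) (cst' : C → U')
    (M : ACMAS D sig Ag) (M' : ACMAS D sig' Ag') : Prop :=
  Bisimilar cst cst' M M' M.s0 M'.s0

/-- ⊕-simulation. -/
def IsOSim (cst : C → U) (cst' : C → U')
    (M : ACMAS D sig Ag) (M' : ACMAS D sig' Ag')
    (R : GState D n U → GState D n U' → Prop) : Prop :=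
  ∀ s s', R s s' →
    s ∈ M.S ∧ s' ∈ M'.S ∧ Iso cst cst' s s' ∧
    (∀ t, M.Tr s t → ∃ t', M'.Tr s' t' ∧
        Iso cst cst' (oplusG s t) (oplusG s' t') ∧ R t t') ∧
    (∀ (t : GState D n U) (i : Fin n), M.Epi i.succ s t →
        ∃ t', M'.Epi i.succ s' t' ∧
          Iso cst cst' (oplusG s t) (oplusG s' t') ∧ R t t')

/-- ⊕-bisimulation. -/
def IsOBisim (cst : C → U) (cst' : C → U')
    (M : ACMAS D sig Ag) (M' : ACMAS D sig' Ag')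
    (R : GState D n U → GState D n U' → Prop) : Prop :=
  IsOSim cst cst' M M' R ∧ IsOSim cst' cst M' M (fun s' s => R s s')

/-- ⊕-bisimilarity of states. -/
def OBisimilar (cst : C → U) (cst' : C → U')
    (M : ACMAS D sig Ag) (M' : ACMAS D sig' Ag')
    (s : GState D n U) (s' : GState D n U') : Prop :=
  ∃ R, IsOBisim cst cst' M M' R ∧ R s s'

/-- The two systems are ⊕-bisimilar. -/
def OBisimSys (cst : C → U) (cst' : C → U')
    (M : ACMAS D sig Ag) (M' : ACMAS D sig' Ag') : Prop :=
  OBisimilar cst cst' M M' M.s0 M'.s0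

end Bisim

/-! ### Uniformity and boundedness -/

section Uniform

variable {D : Schema} {n : ℕ} {sig : Fin (n+1) → AgentSig} {C U : Type}
  {Ag : ∀ i, Agent D (sig i) U}

/-- Temporal condition (1) of uniformity. -/
def UniformT (cst : C → U) (M : ACMAS D sig Ag) : Prop :=
  ∀ s ∈ M.S, ∀ t ∈ M.S, ∀ s' ∈ M.S, ∀ (t' : GState D n U) (a : JAct sig U),
    t ∈ M.τ s a →
    ∀ ι : U → U, IsWitness cst cst ι (oplusG s t) (oplusG s' t') →
    ∀ ι' : U → U,
      (∀ u ∈ adomF (oplusG s t) ∪ Set.range cst, ι' u = ι u) →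
      Set.InjOn ι' (adomF (oplusG s t) ∪ Set.range cst ∪ actElems a) →
      (∀ c, ι' (cst c) = cst c) →
      t' ∈ M.τ s' (JAct.map ι' a)

/-- Epistemic condition (2) of uniformity. -/
def UniformE (cst : C → U) (M : ACMAS D sig Ag) : Prop :=
  ∀ s ∈ M.S, ∀ t ∈ M.S, ∀ s' ∈ M.S, ∀ (t' : GState D n U) (i : Fin n),
    M.Epi i.succ s t → Iso cst cst (oplusG s t) (oplusG s' t') →
    M.Epi i.succ s' t'

/-- Uniform AC-MAS. -/
def Uniform (cst : C → U) (M : ACMAS D sig Ag) : Prop :=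
  UniformT cst M ∧ UniformE cst M

/-- `b`-bounded AC-MAS: no reachable state has more than `b` distinct elements
in its active domain. -/
def BBounded (M : ACMAS D sig Ag) (b : ℕ) : Prop :=
  ∀ s ∈ M.S, (adomF s).Finite ∧ (adomF s).ncard ≤ b

end Uniform

/-- `N_Ag`: the sum over the agents of the maximal number of parameters of
their action types. -/
def NAg {n : ℕ} (sig : Fin (n+1) → AgentSig) : ℕ :=
  ∑ i, Finset.univ.sup (sig i).np

/-! ### Abstractions -/

section Abstraction

variable {D : Schema} {n : ℕ} {sig : Fin (n+1) → AgentSig} {C U U' : Type}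
  {Ag : ∀ i, Agent D (sig i) U} {Ag' : ∀ i, Agent D (sig i) U'}

/-- `A'` is the abstract agent corresponding to `A`, over the domain `U'`. -/
def IsAbstractAgent {g : AgentSig} (cst : C → U) (cst' : C → U')
    (A : Agent D g U) (A' : Agent D g U') : Prop :=
  ∀ (l' : Inst D U') (α' : GAct g U'), α' ∈ A'.Pr l' ↔
    ∃ l ∈ A.L, ∃ α ∈ A.Pr l, ∃ ι : U → U',
      IsWitness cst cst' ι (fun _ : PUnit => l) (fun _ : PUnit => l') ∧
      ∃ ι' : U → U',
        (∀ u ∈ l.adom ∪ Set.range cst, ι' u = ι u) ∧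
        Set.InjOn ι' (l.adom ∪ Set.range cst ∪ Set.range α.2) ∧
        α' = α.map ι'

/-- `M'` is an abstraction of `M` (over the abstract agents `Ag'`). -/
def IsAbstraction (cst : C → U) (cst' : C → U')
    (M : ACMAS D sig Ag) (M' : ACMAS D sig Ag') : Prop :=
  (∀ i, IsAbstractAgent cst cst' (Ag i) (Ag' i)) ∧
  Iso cst' cst M'.s0 M.s0 ∧
  ∀ (s' t' : GState D n U') (a' : JAct sig U'),
    t' ∈ M'.τ s' a' ↔
      ∃ s ∈ M.S, ∃ t ∈ M.S, ∃ a : JAct sig U, t ∈ M.τ s a ∧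
        ∃ ι : U → U', IsWitness cst cst' ι s s' ∧ IsWitness cst cst' ι t t' ∧
          ∃ ι' : U → U',
            (∀ u ∈ adomF s ∪ adomF t ∪ Set.range cst, ι' u = ι u) ∧
            Set.InjOn ι' (adomF s ∪ adomF t ∪ Set.range cst ∪ actElems a) ∧
            a' = JAct.map ι' a

/-- `M'` is a ⊕-abstraction of `M` (over the abstract agents `Ag'`).
The requirement `s0' = s0` is rendered, across the two interpretation
domains, as: the initial states are isomorphic and `adom(s0) ⊆ C`. -/
def IsOAbstraction (cst : C → U) (cst' : C → U')
    (M : ACMAS D sig Ag) (M' : ACMAS D sig Ag') : Prop :=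
  (∀ i, IsAbstractAgent cst cst' (Ag i) (Ag' i)) ∧
  (Iso cst cst' M.s0 M'.s0 ∧ adomF M.s0 ⊆ Set.range cst) ∧
  ∀ (s' t' : GState D n U') (a' : JAct sig U'),
    t' ∈ M'.τ s' a' ↔
      ∃ s ∈ M.S, ∃ t ∈ M.S, ∃ a : JAct sig U, t ∈ M.τ s a ∧
        ∃ ι : U → U',
          IsWitness cst cst' ι (oplusG s t) (oplusG s' t') ∧
          ∃ ι' : U → U',
            (∀ u ∈ adomF (oplusG s t) ∪ Set.range cst, ι' u = ι u) ∧
            Set.InjOn ι' (adomF (oplusG s t) ∪ Set.range cst ∪ actElems a) ∧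
            a' = JAct.map ι' a

end Abstraction

/-! ### Temporal-epistemic specification languages -/

/-- Sentence-atomic FO-CTL formulas. -/
inductive SAFOCTL (D : Schema) (C : Type) : Type where
  | atom : (ψ : FO D C) → ψ.free = ∅ → SAFOCTL D C
  | not : SAFOCTL D C → SAFOCTL D C
  | imp : SAFOCTL D C → SAFOCTL D C → SAFOCTL D C
  | ax : SAFOCTL D C → SAFOCTL D C
  | au : SAFOCTL D C → SAFOCTL D C → SAFOCTL D C
  | eu : SAFOCTL D C → SAFOCTL D C → SAFOCTL D C

/-- Satisfaction of SA-FO-CTL formulas at a global state. -/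
def SAFOCTL.sat {D : Schema} {C : Type} {n : ℕ} {sig : Fin (n+1) → AgentSig}
    {U : Type} {Ag : ∀ i, Agent D (sig i) U}
    (cst : C → U) (M : ACMAS D sig Ag) :
    SAFOCTL D C → GState D n U → Prop
  | .atom ψ _, s => ∀ σ, FO.sat cst (gInst s) σ ψ
  | .not φ, s => ¬ SAFOCTL.sat cst M φ s
  | .imp φ ψ, s => SAFOCTL.sat cst M φ s → SAFOCTL.sat cst M ψ s
  | .ax φ, s => ∀ r, M.IsRun r → r 0 = s → SAFOCTL.sat cst M φ (r 1)
  | .au φ ψ, s => ∀ r, M.IsRun r → r 0 = s →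
      ∃ k, SAFOCTL.sat cst M ψ (r k) ∧ ∀ j < k, SAFOCTL.sat cst M φ (r j)
  | .eu φ ψ, s => ∃ r, M.IsRun r ∧ r 0 = s ∧
      ∃ k, SAFOCTL.sat cst M ψ (r k) ∧ ∀ j < k, SAFOCTL.sat cst M φ (r j)

/-- `P ⊨ φ` for SA-FO-CTL. -/
def SAFOCTL.satM {D : Schema} {C : Type} {n : ℕ} {sig : Fin (n+1) → AgentSig}
    {U : Type} {Ag : ∀ i, Agent D (sig i) U}
    (cst : C → U) (M : ACMAS D sig Ag) (φ : SAFOCTL D C) : Prop :=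
  SAFOCTL.sat cst M φ M.s0

/-- FO-CTLK formulas, with epistemic operators for agents `1, …, n` and
common knowledge. -/
inductive FOCTLK (D : Schema) (C : Type) (n : ℕ) : Type where
  | atom : FO D C → FOCTLK D C n
  | not : FOCTLK D C n → FOCTLK D C n
  | imp : FOCTLK D C n → FOCTLK D C n → FOCTLK D C n
  | all : ℕ → FOCTLK D C n → FOCTLK D C n
  | ax : FOCTLK D C n → FOCTLK D C n
  | au : FOCTLK D C n → FOCTLK D C n → FOCTLK D C n
  | eu : FOCTLK D C n → FOCTLK D C n → FOCTLK D C n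
  | know : Fin n → FOCTLK D C n → FOCTLK D C n
  | ck : FOCTLK D C n → FOCTLK D C n

namespace FOCTLK

variable {D : Schema} {C : Type} {n : ℕ}

def free : FOCTLK D C n → Finset ℕ
  | .atom ψ => ψ.free
  | .not φ => φ.free
  | .imp φ ψ => φ.free ∪ ψ.free
  | .all x φ => φ.free.erase x
  | .ax φ => φ.free
  | .au φ ψ => φ.free ∪ ψ.free
  | .eu φ ψ => φ.free ∪ ψ.free
  | .know _ φ => φ.free
  | .ck φ => φ.free

def vars : FOCTLK D C n → Finset ℕ
  | .atom ψ => ψ.vars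
  | .not φ => φ.vars
  | .imp φ ψ => φ.vars ∪ ψ.vars
  | .all x φ => insert x φ.vars
  | .ax φ => φ.vars
  | .au φ ψ => φ.vars ∪ ψ.vars
  | .eu φ ψ => φ.vars ∪ ψ.vars
  | .know _ φ => φ.vars
  | .ck φ => φ.vars

/-- Satisfaction `(P, s, σ) ⊨ φ` of FO-CTLK formulas. -/
def sat {sig : Fin (n+1) → AgentSig} {U : Type} {Ag : ∀ i, Agent D (sig i) U}
    (cst : C → U) (M : ACMAS D sig Ag) :
    FOCTLK D C n → GState D n U → (ℕ → U) → Prop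
  | .atom ψ, s, σ => FO.sat cst (gInst s) σ ψ
  | .not φ, s, σ => ¬ sat cst M φ s σ
  | .imp φ ψ, s, σ => sat cst M φ s σ → sat cst M ψ s σ
  | .all x φ, s, σ => ∀ u ∈ adomF s, sat cst M φ s (Function.update σ x u)
  | .ax φ, s, σ => ∀ r, M.IsRun r → r 0 = s → sat cst M φ (r 1) σ
  | .au φ ψ, s, σ => ∀ r, M.IsRun r → r 0 = s →
      ∃ k, sat cst M ψ (r k) σ ∧ ∀ j < k, sat cst M φ (r j) σ
  | .eu φ ψ, s, σ => ∃ r, M.IsRun r ∧ r 0 = s ∧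
      ∃ k, sat cst M ψ (r k) σ ∧ ∀ j < k, sat cst M φ (r j) σ
  | .know i φ, s, σ => ∀ t, M.Epi i.succ s t → sat cst M φ t σ
  | .ck φ, s, σ => ∀ t, Relation.TransGen M.EpiAny s t → sat cst M φ t σ

/-- `P ⊨ φ` for FO-CTLK: satisfaction at the initial state under every
assignment. -/
def satM {sig : Fin (n+1) → AgentSig} {U : Type} {Ag : ∀ i, Agent D (sig i) U}
    (cst : C → U) (M : ACMAS D sig Ag) (φ : FOCTLK D C n) : Prop :=
  ∀ σ : ℕ → U, sat cst M φ M.s0 σ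

end FOCTLK

/-- FO-ECTLK: the existential fragment. -/
inductive FOECTLK (D : Schema) (C : Type) (n : ℕ) : Type where
  | atom : FO D C → FOECTLK D C n
  | and : FOECTLK D C n → FOECTLK D C n → FOECTLK D C n
  | or : FOECTLK D C n → FOECTLK D C n → FOECTLK D C n
  | all : ℕ → FOECTLK D C n → FOECTLK D C n
  | ex : ℕ → FOECTLK D C n → FOECTLK D C n
  | enext : FOECTLK D C n → FOECTLK D C n
  | eu : FOECTLK D C n → FOECTLK D C n → FOECTLK D C n
  | dknow : Fin n → FOECTLK D C n → FOECTLK D C n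
  | dck : FOECTLK D C n → FOECTLK D C n

/-- Satisfaction of FO-ECTLK formulas. -/
def FOECTLK.sat {D : Schema} {C : Type} {n : ℕ} {sig : Fin (n+1) → AgentSig}
    {U : Type} {Ag : ∀ i, Agent D (sig i) U}
    (cst : C → U) (M : ACMAS D sig Ag) :
    FOECTLK D C n → GState D n U → (ℕ → U) → Prop
  | .atom ψ, s, σ => FO.sat cst (gInst s) σ ψ
  | .and φ ψ, s, σ => FOECTLK.sat cst M φ s σ ∧ FOECTLK.sat cst M ψ s σ
  | .or φ ψ, s, σ => FOECTLK.sat cst M φ s σ ∨ FOECTLK.sat cst M ψ s σ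
  | .all x φ, s, σ => ∀ u ∈ adomF s, FOECTLK.sat cst M φ s (Function.update σ x u)
  | .ex x φ, s, σ => ∃ u ∈ adomF s, FOECTLK.sat cst M φ s (Function.update σ x u)
  | .enext φ, s, σ => ∃ r, M.IsRun r ∧ r 0 = s ∧ FOECTLK.sat cst M φ (r 1) σ
  | .eu φ ψ, s, σ => ∃ r, M.IsRun r ∧ r 0 = s ∧
      ∃ k, FOECTLK.sat cst M ψ (r k) σ ∧ ∀ j < k, FOECTLK.sat cst M φ (r j) σ
  | .dknow i φ, s, σ => ∃ t, M.Epi i.succ s t ∧ FOECTLK.sat cst M φ t σ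
  | .dck φ, s, σ => ∃ t, Relation.TransGen M.EpiAny s t ∧ FOECTLK.sat cst M φ t σ

/-- `P ⊨ φ` for FO-ECTLK. -/
def FOECTLK.satM {D : Schema} {C : Type} {n : ℕ} {sig : Fin (n+1) → AgentSig}
    {U : Type} {Ag : ∀ i, Agent D (sig i) U}
    (cst : C → U) (M : ACMAS D sig Ag) (φ : FOECTLK D C n) : Prop :=
  ∀ σ : ℕ → U, FOECTLK.sat cst M φ M.s0 σ

/-- `Mb` is the `b`-restriction of `M`. -/
def IsBRestriction {D : Schema} {n : ℕ} {sig : Fin (n+1) → AgentSig} {U : Type}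
    {Ag : ∀ i, Agent D (sig i) U} (Mb M : ACMAS D sig Ag) (b : ℕ) : Prop :=
  Mb.s0 = M.s0 ∧
  Mb.S = { s ∈ M.S | (adomF s).Finite ∧ (adomF s).ncard ≤ b } ∧
  ∀ s a, Mb.τ s a = { t ∈ M.τ s a | s ∈ Mb.S ∧ t ∈ Mb.S }

/-! ### Artifact-centric programs -/

/-- A declarative artifact-centric program. -/
structure ACProgram (D : Schema) (C : Type) {n : ℕ} (sig : Fin (n+1) → AgentSig) where
  /-- local database schemas, as sets of relation symbols -/
  locRel : Fin (n+1) → Set D.Rel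
  locDisj : ∀ i j, i ≠ j → Disjoint (locRel i) (locRel j)
  /-- initial local states; their values are constants -/
  l0 : ∀ _ : Fin (n+1), Inst D C
  l0_loc : ∀ i r, r ∉ locRel i → (l0 i).rel r = ∅
  /-- preconditions: FO-formulas over the local schema whose free variables
  are among the action parameters -/
  pre : ∀ i, (sig i).Act → FO D C
  /-- postconditions: FO-formulas over the global schema and its primed copy -/
  post : ∀ i, (sig i).Act → FO D.double C
  pre_free : ∀ i a, ↑(pre i a).free ⊆ { x : ℕ | x < (sig i).np a }
  post_free : ∀ i a, ↑(post i a).free ⊆ { x : ℕ | x < (sig i).np a }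
  pre_loc : ∀ i a, (pre i a).UsesOnly (locRel i)

namespace ACProgram

variable {D : Schema} {C : Type} {n : ℕ} {sig : Fin (n+1) → AgentSig}

/-- The constants mentioned in the program. -/
def progConsts (P : ACProgram D C sig) : Set C :=
  (⋃ i, (P.l0 i).adom) ∪
  ⋃ i, ⋃ a : (sig i).Act, ((P.pre i a).consts ∪ (P.post i a).consts)

/-- Ground values of the postcondition parameters of a joint ground action. -/
def postElems (P : ACProgram D C sig) {U : Type} (a : JAct sig U) : Set U :=
  { u | ∃ (i : Fin (n+1)) (j : Fin ((sig i).np (a i).1)),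
      (j : ℕ) ∈ (P.post i (a i).1).free ∧ (a i).2 j = u }

/-- The agent induced by the program for index `i`. -/
def InducedAgent {U : Type} (cst : C → U) (P : ACProgram D C sig) (i : Fin (n+1))
    (A : Agent D (sig i) U) : Prop :=
  A.L = { l : Inst D U | ∀ r, r ∉ P.locRel i → l.rel r = ∅ } ∧
  ∀ (l : Inst D U) (α : GAct (sig i) U), α ∈ A.Pr l ↔
    ∀ σ : ℕ → U, (∀ j : Fin ((sig i).np α.1), σ (j : ℕ) = α.2 j) →
      FO.sat cst l σ (P.pre i α.1)

/-- The transitions induced by the program. -/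
def InducedTrans {U : Type} (cst : C → U) (P : ACProgram D C sig)
    (s t : GState D n U) (a : JAct sig U) : Prop :=
  (∀ i, ∀ σ : ℕ → U, (∀ j : Fin ((sig i).np (a i).1), σ (j : ℕ) = (a i).2 j) →
      FO.sat cst (s i) σ (P.pre i (a i).1)) ∧
  adomF t ⊆ adomF s ∪ P.postElems a ∪ cst '' (⋃ i, (P.post i (a i).1).consts) ∧
  (∀ i, ∀ σ : ℕ → U, (∀ j : Fin ((sig i).np (a i).1), σ (j : ℕ) = (a i).2 j) →
      FO.sat cst ((gInst s).oplus (gInst t)) σ (P.post i (a i).1))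

/-- `M` is the AC-MAS induced by the program `P` (the transition relation is
assumed to be serial). -/
def InducedACMAS {U : Type} (cst : C → U) (P : ACProgram D C sig)
    (Ag : ∀ i, Agent D (sig i) U) (M : ACMAS D sig Ag) : Prop :=
  (∀ i, P.InducedAgent cst i (Ag i)) ∧
  M.s0 = (fun i => (P.l0 i).map cst) ∧
  (∀ s t a, t ∈ M.τ s a ↔ P.InducedTrans cst s t a) ∧
  M.Std

end ACProgram

/-! ### Auxiliary lemmas for Statement 12 -/

section Statement12Aux

open Set

variable {D : Schema} {C : Type}

lemma Inst.ext' {U : Type} {I J : Inst D U} (h : I.rel = J.rel) : I = J := by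
  cases I; cases J; simp_all

lemma mem_adomF {X U : Type} {s : X → Inst D U} {i : X} {r : D.Rel}
    {t : Fin (D.arity r) → U} (ht : t ∈ (s i).rel r) (j : Fin (D.arity r)) :
    t j ∈ adomF s :=
  Set.mem_iUnion.2 ⟨i, r, t, ht, j, rfl⟩

lemma Inst.adom_finite {U : Type} (I : Inst D U) : I.adom.Finite := by
  have hsub : I.adom ⊆ ⋃ r : D.Rel, ⋃ t ∈ I.rel r, Set.range t := by
    rintro u ⟨r, t, ht, j, rfl⟩
    exact Set.mem_iUnion.2 ⟨r, Set.mem_iUnion₂.2 ⟨t, ht, ⟨j, rfl⟩⟩⟩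
  exact ((Set.finite_iUnion fun r =>
    (I.finite r).biUnion fun t _ => Set.finite_range t)).subset hsub

lemma adomF_finite {X U : Type} [Finite X] (s : X → Inst D U) : (adomF s).Finite :=
  Set.finite_iUnion fun i => (s i).adom_finite

lemma Inst.adom_oplus {U : Type} (I J : Inst D U) :
    (I.oplus J).adom = I.adom ∪ J.adom := by
  ext u
  constructor
  · rintro ⟨r, t, ht, j, rfl⟩
    cases r with
    | inl r => exact Or.inl ⟨r, t, ht, j, rfl⟩
    | inr r => exact Or.inr ⟨r, t, ht, j, rfl⟩
  · rintro (⟨r, t, ht, j, rfl⟩ | ⟨r, t, ht, j, rfl⟩)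
    · exact ⟨Sum.inl r, t, ht, j, rfl⟩
    · exact ⟨Sum.inr r, t, ht, j, rfl⟩

lemma adomF_oplusG {n : ℕ} {U : Type} (s t : GState D n U) :
    adomF (oplusG s t) = adomF s ∪ adomF t := by
  simp only [adomF, oplusG, Inst.adom_oplus, Set.iUnion_union_distrib]

lemma Inst.adom_map {U U' : Type} (f : U → U') (I : Inst D U) :
    (I.map f).adom = f '' I.adom := by
  ext v
  constructor
  · rintro ⟨r, t, ⟨w, hw, rfl⟩, j, rfl⟩
    exact ⟨w j, ⟨r, w, hw, j, rfl⟩, rfl⟩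
  · rintro ⟨u, ⟨r, t, ht, j, rfl⟩, rfl⟩
    exact ⟨r, f ∘ t, ⟨t, ht, rfl⟩, j, rfl⟩

lemma adomF_map {X U U' : Type} (f : U → U') (s : X → Inst D U) :
    adomF (fun i => (s i).map f) = f '' adomF s := by
  simp [adomF, Inst.adom_map, Set.image_iUnion]

lemma actElems_finite {n : ℕ} {sig : Fin (n+1) → AgentSig} {U : Type} (a : JAct sig U) :
    (actElems a).Finite := by
  have hsub : actElems a ⊆ ⋃ i, Set.range (a i).2 := by
    rintro u ⟨i, j, rfl⟩
    exact Set.mem_iUnion.2 ⟨i, j, rfl⟩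
  exact (Set.finite_iUnion fun i => Set.finite_range _).subset hsub

lemma IsWitness.rel_image {X U U' : Type} {cst : C → U} {cst' : C → U'} {ι : U → U'}
    {s : X → Inst D U} {s' : X → Inst D U'} (h : IsWitness cst cst' ι s s')
    (i : X) (r : D.Rel) :
    (s' i).rel r = (fun t => ι ∘ t) '' ((s i).rel r) := by
  ext v
  constructor
  · intro hv
    have hc : ∀ j, v j ∈ adomF s' ∪ Set.range cst' := fun j =>
      Or.inl (mem_adomF hv j)
    choose w hw hwi using fun j => h.1.2.2 (hc j)
    have hrel : (fun j => ι (w j)) ∈ (s' i).rel r := by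
      have he : (fun j => ι (w j)) = v := funext hwi
      rwa [he]
    exact ⟨w, (h.2.2 i r w hw).2 hrel, funext hwi⟩
  · rintro ⟨w, hw, rfl⟩
    have hc : ∀ j, w j ∈ adomF s ∪ Set.range cst := fun j =>
      Or.inl (mem_adomF hw j)
    exact (h.2.2 i r w hc).1 hw

lemma IsWitness.image_adomF {X U U' : Type} {cst : C → U} {cst' : C → U'} {ι : U → U'}
    {s : X → Inst D U} {s' : X → Inst D U'} (h : IsWitness cst cst' ι s s') :
    ι '' (adomF s) = adomF s' := by
  ext v
  constructor
  · rintro ⟨u, hu, rfl⟩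
    obtain ⟨i, r, t, ht, j, rfl⟩ := Set.mem_iUnion.1 hu
    have := (h.2.2 i r t (fun j => Or.inl (mem_adomF ht j))).1 ht
    exact mem_adomF this j
  · intro hv
    obtain ⟨i, r, t, ht, j, rfl⟩ := Set.mem_iUnion.1 hv
    rw [h.rel_image i r] at ht
    obtain ⟨w, hw, rfl⟩ := ht
    exact ⟨w j, mem_adomF hw j, rfl⟩

lemma IsWitness.image_dom {X U U' : Type} {cst : C → U} {cst' : C → U'} {ι : U → U'}
    {s : X → Inst D U} {s' : X → Inst D U'} (h : IsWitness cst cst' ι s s') :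
    ι '' (adomF s ∪ Set.range cst) = adomF s' ∪ Set.range cst' := by
  rw [Set.image_union, h.image_adomF]
  congr 1
  ext v
  constructor
  · rintro ⟨u, ⟨c, rfl⟩, rfl⟩; exact ⟨c, (h.2.1 c).symm⟩
  · rintro ⟨c, rfl⟩; exact ⟨cst c, ⟨c, rfl⟩, h.2.1 c⟩

lemma IsWitness.comp {X U U' U'' : Type} {cst : C → U} {cst' : C → U'} {cst'' : C → U''}
    {ι : U → U'} {κ : U' → U''} {s : X → Inst D U} {s' : X → Inst D U'}
    {s'' : X → Inst D U''}
    (h : IsWitness cst cst' ι s s') (h' : IsWitness cst' cst'' κ s' s'') :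
    IsWitness cst cst'' (κ ∘ ι) s s'' := by
  refine ⟨h'.1.comp h.1, fun c => by
    simp only [Function.comp_apply, h.2.1 c, h'.2.1 c], ?_⟩
  intro i r t ht
  have h1 := h.2.2 i r t ht
  have h2 := h'.2.2 i r (fun j => ι (t j)) (fun j => h.1.1 (ht j))
  exact h1.trans h2

lemma witness_fst {n : ℕ} {U U' : Type} {cst : C → U} {cst' : C → U'} {ι : U → U'}
    {s t : GState D n U} {s' t' : GState D n U'}
    (h : IsWitness cst cst' ι (oplusG s t) (oplusG s' t')) :
    IsWitness cst cst' ι s s' := by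
  have hsub : adomF s ∪ Set.range cst ⊆ adomF (oplusG s t) ∪ Set.range cst := by
    rw [adomF_oplusG]; exact Set.union_subset_union_left _ Set.subset_union_left
  have hrel : ∀ (i : Fin (n+1)) (r : D.Rel) (tup : Fin (D.arity r) → U),
      (∀ j, tup j ∈ adomF s ∪ Set.range cst) →
      (tup ∈ (s i).rel r ↔ (fun j => ι (tup j)) ∈ (s' i).rel r) := by
    intro i r tup hc
    exact h.2.2 i (Sum.inl r) tup (fun j => hsub (hc j))
  have himg : ι '' (adomF s ∪ Set.range cst) = adomF s' ∪ Set.range cst' := by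
    apply Set.Subset.antisymm
    · rintro v ⟨u, hu, rfl⟩
      rcases hu with hu | ⟨c, rfl⟩
      · obtain ⟨i, r, tup, htup, j, rfl⟩ := Set.mem_iUnion.1 hu
        have := (hrel i r tup (fun j => Or.inl (mem_adomF htup j))).1 htup
        exact Or.inl (mem_adomF this j)
      · exact Or.inr ⟨c, (h.2.1 c).symm⟩
    · rintro v (hv | ⟨c, rfl⟩)
      · obtain ⟨i, r, tup, htup, j, rfl⟩ := Set.mem_iUnion.1 hv
        have htup' : tup ∈ ((oplusG s' t') i).rel (Sum.inl r) := htup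
        rw [h.rel_image i (Sum.inl r)] at htup'
        obtain ⟨w, hw, rfl⟩ := htup'
        have hw' : w ∈ (s i).rel r := hw
        exact ⟨w j, Or.inl (mem_adomF hw' j), rfl⟩
      · exact ⟨cst c, Or.inr ⟨c, rfl⟩, h.2.1 c⟩
  exact ⟨⟨fun u hu => himg ▸ Set.mem_image_of_mem ι hu,
    h.1.2.1.mono hsub, himg.symm.subset⟩, h.2.1, hrel⟩

lemma witness_snd {n : ℕ} {U U' : Type} {cst : C → U} {cst' : C → U'} {ι : U → U'}
    {s t : GState D n U} {s' t' : GState D n U'}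
    (h : IsWitness cst cst' ι (oplusG s t) (oplusG s' t')) :
    IsWitness cst cst' ι t t' := by
  have hsub : adomF t ∪ Set.range cst ⊆ adomF (oplusG s t) ∪ Set.range cst := by
    rw [adomF_oplusG]; exact Set.union_subset_union_left _ Set.subset_union_right
  have hrel : ∀ (i : Fin (n+1)) (r : D.Rel) (tup : Fin (D.arity r) → U),
      (∀ j, tup j ∈ adomF t ∪ Set.range cst) →
      (tup ∈ (t i).rel r ↔ (fun j => ι (tup j)) ∈ (t' i).rel r) := by
    intro i r tup hc
    exact h.2.2 i (Sum.inr r) tup (fun j => hsub (hc j))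
  have himg : ι '' (adomF t ∪ Set.range cst) = adomF t' ∪ Set.range cst' := by
    apply Set.Subset.antisymm
    · rintro v ⟨u, hu, rfl⟩
      rcases hu with hu | ⟨c, rfl⟩
      · obtain ⟨i, r, tup, htup, j, rfl⟩ := Set.mem_iUnion.1 hu
        have := (hrel i r tup (fun j => Or.inl (mem_adomF htup j))).1 htup
        exact Or.inl (mem_adomF this j)
      · exact Or.inr ⟨c, (h.2.1 c).symm⟩
    · rintro v (hv | ⟨c, rfl⟩)
      · obtain ⟨i, r, tup, htup, j, rfl⟩ := Set.mem_iUnion.1 hv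
        have htup' : tup ∈ ((oplusG s' t') i).rel (Sum.inr r) := htup
        rw [h.rel_image i (Sum.inr r)] at htup'
        obtain ⟨w, hw, rfl⟩ := htup'
        have hw' : w ∈ (t i).rel r := hw
        exact ⟨w j, Or.inl (mem_adomF hw' j), rfl⟩
      · exact ⟨cst c, Or.inr ⟨c, rfl⟩, h.2.1 c⟩
  exact ⟨⟨fun u hu => himg ▸ Set.mem_image_of_mem ι hu,
    h.1.2.1.mono hsub, himg.symm.subset⟩, h.2.1, hrel⟩

lemma witness_transfer {X U U' : Type} {cst : C → U} {cst' : C → U'}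
    {κ ν : U → U'} {s : X → Inst D U} {b q : X → Inst D U'}
    (hκ : IsWitness cst cst' κ s b) (hν : IsWitness cst cst' ν s q) :
    ∃ θ : U' → U', IsWitness cst' cst' θ b q := by
  classical
  set dom := adomF s ∪ Set.range cst with hdom
  refine ⟨fun v => if h : ∃ u, u ∈ dom ∧ κ u = v then ν h.choose else v, ?_⟩
  set θ : U' → U' := fun v => if h : ∃ u, u ∈ dom ∧ κ u = v then ν h.choose else v
    with hθdef
  have hspec : ∀ u ∈ dom, θ (κ u) = ν u := by
    intro u hu
    have hex : ∃ u', u' ∈ dom ∧ κ u' = κ u := ⟨u, hu, rfl⟩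
    have h1 : θ (κ u) = ν hex.choose := dif_pos hex
    have h2 : hex.choose = u := hκ.1.2.1 hex.choose_spec.1 hu hex.choose_spec.2
    rw [h1, h2]
  have himgκ : κ '' dom = adomF b ∪ Set.range cst' := hκ.image_dom
  have himgν : ν '' dom = adomF q ∪ Set.range cst' := hν.image_dom
  have hmaps : ∀ v ∈ adomF b ∪ Set.range cst', θ v ∈ adomF q ∪ Set.range cst' := by
    intro v hv
    obtain ⟨u, hu, rfl⟩ := himgκ.symm ▸ hv
    rw [hspec u hu, ← himgν]
    exact Set.mem_image_of_mem ν hu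
  refine ⟨⟨hmaps, ?_, ?_⟩, ?_, ?_⟩
  · intro v hv v' hv' hvv
    obtain ⟨u, hu, rfl⟩ := himgκ.symm ▸ hv
    obtain ⟨u', hu', rfl⟩ := himgκ.symm ▸ hv'
    rw [hspec u hu, hspec u' hu'] at hvv
    rw [hν.1.2.1 hu hu' hvv]
  · intro v hv
    obtain ⟨u, hu, rfl⟩ := himgν.symm ▸ hv
    exact ⟨κ u, himgκ ▸ Set.mem_image_of_mem κ hu, hspec u hu⟩
  · intro c
    have h1 : θ (cst' c) = θ (κ (cst c)) := by rw [hκ.2.1 c]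
    rw [h1, hspec (cst c) (Or.inr ⟨c, rfl⟩), hν.2.1 c]
  · intro i r tup hc
    have hex : ∀ j, ∃ u, u ∈ dom ∧ κ u = tup j := by
      intro j
      obtain ⟨u, hu, he⟩ := himgκ.symm ▸ hc j
      exact ⟨u, hu, he⟩
    choose w hw hwe using hex
    have h1 : tup ∈ (b i).rel r ↔ w ∈ (s i).rel r := by
      have := hκ.2.2 i r w (fun j => hw j)
      rw [show (fun j => κ (w j)) = tup from funext hwe] at this
      exact this.symm
    have h2 : w ∈ (s i).rel r ↔ (fun j => ν (w j)) ∈ (q i).rel r :=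
      hν.2.2 i r w (fun j => hw j)
    have h3 : (fun j => θ (tup j)) = fun j => ν (w j) := by
      funext j
      rw [← hwe j, hspec (w j) (hw j)]
    rw [h3]
    exact h1.trans h2

lemma witness_id_of_adom_subset {X U' : Type} {cst' : C → U'} {θ : U' → U'}
    {x y : X → Inst D U'} (h : IsWitness cst' cst' θ x y)
    (hadom : adomF x ⊆ Set.range cst') : y = x := by
  have hid : ∀ u ∈ adomF x ∪ Set.range cst', θ u = u := by
    intro u hu
    have hu' : u ∈ Set.range cst' := by
      rcases hu with hu | hu
      · exact hadom hu
      · exact hu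
    obtain ⟨c, rfl⟩ := hu'
    exact h.2.1 c
  funext i
  apply Inst.ext'
  funext r
  rw [h.rel_image i r]
  ext tup
  constructor
  · rintro ⟨w, hw, rfl⟩
    have he : θ ∘ w = w := funext fun j => hid _ (Or.inl (mem_adomF hw j))
    show θ ∘ w ∈ _
    rw [he]; exact hw
  · intro htup
    exact ⟨tup, htup, funext fun j => hid _ (Or.inl (mem_adomF htup j))⟩

lemma inj_avoid {U U' : Type} {E : Set U} {S T : Set U'} (hE : E.Finite)
    (w : U → U') (hw : Set.InjOn w E) (hdisj : ∀ u ∈ E, w u ∉ S)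
    (hS : S.Finite) (hST : S.encard = T.encard) :
    ∃ g : U → U', Set.InjOn g E ∧ ∀ u ∈ E, g u ∉ T := by
  cases isEmpty_or_nonempty U' with
  | inl h =>
    exact ⟨w, hw, fun u hu => (h.false (w u)).elim⟩
  | inr h =>
    have h1 : E.encard ≤ Sᶜ.encard :=
      Set.encard_le_encard_of_injOn (fun u hu => hdisj u hu) hw
    have hTne : T.encard ≠ ⊤ := by
      rw [← hST]; exact hS.encard_lt_top.ne
    have h2 : Sᶜ.encard = Tᶜ.encard := by
      have e1 := Set.encard_add_encard_compl S
      have e2 := Set.encard_add_encard_compl T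
      rw [hST] at e1
      exact WithTop.add_left_cancel hTne (e1.trans e2.symm)
    obtain ⟨f, hf1, hf2⟩ := hE.exists_injOn_of_encard_le (h1.trans h2.le)
    exact ⟨f, hf2, fun u hu => hf1 hu⟩

end Statement12Aux

/-! ### STATEMENT 12 -/

theorem statement12
    {D : Schema} {C : Type} [Fintype C] {n : ℕ}
    {sig : Fin (n+1) → AgentSig} {U U' : Type}
    (cst : C → U) (cst' : C → U')
    (hcst : Function.Injective cst) (hcst' : Function.Injective cst')
    {Ag : ∀ i, Agent D (sig i) U} {Ag' : ∀ i, Agent D (sig i) U'}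
    (M : ACMAS D sig Ag) (M' : ACMAS D sig Ag')
    (hM : M.Std) (hM' : M'.Std)
    (habs : IsOAbstraction cst cst' M M') :
    Uniform cst' M' := by
  classical
  have hadom0 : adomF M'.s0 ⊆ Set.range cst' := by
    obtain ⟨θ0, hθ0⟩ := habs.2.1.1
    have himg := hθ0.image_dom
    rw [Set.union_eq_self_of_subset_left habs.2.1.2] at himg
    intro v hv
    have hv' : v ∈ θ0 '' Set.range cst := by rw [himg]; exact Or.inl hv
    obtain ⟨u, ⟨c0, rfl⟩, rfl⟩ := hv'
    exact ⟨c0, (hθ0.2.1 c0).symm⟩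
  -- closure of `M'.S` under isomorphism
  have closed : ∀ y : GState D n U', Relation.ReflTransGen M'.Tr M'.s0 y →
      ∀ (z : GState D n U') (θ : U' → U'), IsWitness cst' cst' θ y z → z ∈ M'.S := by
    intro y hy
    induction hy with
    | refl =>
      intro z θ hθ
      rw [witness_id_of_adom_subset hθ hadom0]
      exact M'.s0_mem
    | @tail b c hb hbc ih =>
      intro z θ hθ
      obtain ⟨a', hc⟩ := hbc
      obtain ⟨s₀, hs₀, t₀, ht₀, a₀, htr₀, κ, hκ, κ', hκag, hκinj, ha'⟩ :=
        (habs.2.2 b c a').1 hc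
      set A₀ := adomF (oplusG s₀ t₀) ∪ Set.range cst with hA₀def
      set B₁ := adomF c ∪ Set.range cst' with hB₁def
      set Tz := adomF z ∪ Set.range cst' with hTzdef
      have hκs : IsWitness cst cst' κ s₀ b := witness_fst hκ
      have hκt : IsWitness cst cst' κ t₀ c := witness_snd hκ
      have hA₀fin : A₀.Finite := (adomF_finite _).union (Set.finite_range _)
      have hB₁fin : B₁.Finite := (adomF_finite _).union (Set.finite_range _)
      have hθbij : Set.BijOn θ B₁ Tz := hθ.1
      have hcard1 : B₁.encard = Tz.encard := by
        rw [← hθbij.injOn.encard_image, hθbij.image_eq]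
      obtain ⟨g, hg1, hg2⟩ := inj_avoid (E := {u | u ∈ A₀ ∧ κ u ∉ B₁})
        (hA₀fin.subset (fun u hu => hu.1)) κ
        (hκ.1.2.1.mono (fun u hu => hu.1)) (fun u hu => hu.2) hB₁fin hcard1
      set ν : U → U' := fun u => if κ u ∈ B₁ then θ (κ u) else g u with hνdef
      have hν1 : ∀ u, κ u ∈ B₁ → ν u = θ (κ u) := fun u h => if_pos h
      have hν2 : ∀ u, κ u ∉ B₁ → ν u = g u := fun u h => if_neg h
      have hνc : ∀ c0 : C, ν (cst c0) = cst' c0 := by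
        intro c0
        have h1 : κ (cst c0) ∈ B₁ := Or.inr ⟨c0, (hκ.2.1 c0).symm⟩
        rw [hν1 _ h1, hκ.2.1 c0, hθ.2.1 c0]
      have hadomt₀ : ∀ u ∈ adomF t₀, κ u ∈ adomF c := by
        intro u hu
        rw [← hκt.image_adomF]
        exact Set.mem_image_of_mem κ hu
      set q : GState D n U' := fun i => (s₀ i).map ν with hqdef
      have hsub_s : adomF s₀ ⊆ A₀ := by
        rw [hA₀def, adomF_oplusG]
        exact fun u hu => Or.inl (Or.inl hu)
      have hinjν : Set.InjOn ν A₀ := by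
        intro u hu v hv huv
        by_cases h1 : κ u ∈ B₁ <;> by_cases h2 : κ v ∈ B₁
        · rw [hν1 u h1, hν1 v h2] at huv
          exact hκ.1.2.1 hu hv (hθbij.2.1 h1 h2 huv)
        · exfalso
          have hu' : ν u ∈ Tz := by rw [hν1 u h1]; exact hθbij.1 h1
          have hv' : ν v ∉ Tz := by rw [hν2 v h2]; exact hg2 v ⟨hv, h2⟩
          rw [huv] at hu'
          exact hv' hu'
        · exfalso
          have hv' : ν v ∈ Tz := by rw [hν1 v h2]; exact hθbij.1 h2
          have hu' : ν u ∉ Tz := by rw [hν2 u h1]; exact hg2 u ⟨hu, h1⟩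
          rw [huv] at hu'
          exact hu' hv'
        · rw [hν2 u h1, hν2 v h2] at huv
          exact hg1 ⟨hu, h1⟩ ⟨hv, h2⟩ huv
      have himg : ν '' A₀ = adomF (oplusG q z) ∪ Set.range cst' := by
        have e1 : ν '' adomF t₀ = adomF z := by
          have he : Set.EqOn ν (θ ∘ κ) (adomF t₀) := fun u hu =>
            hν1 u (Or.inl (hadomt₀ u hu))
          rw [Set.image_congr he, Set.image_comp, hκt.image_adomF, hθ.image_adomF]
        have e2 : ν '' Set.range cst = Set.range cst' := by
          rw [← Set.range_comp]
          have : ν ∘ cst = cst' := funext hνc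
          rw [this]
        have e3 : adomF q = ν '' adomF s₀ := by
          rw [hqdef]; exact adomF_map ν s₀
        rw [hA₀def, adomF_oplusG, adomF_oplusG, Set.image_union, Set.image_union,
          e1, e2, e3]
      have hmapsν : ∀ u ∈ A₀, ν u ∈ adomF (oplusG q z) ∪ Set.range cst' := by
        intro u hu
        rw [← himg]
        exact Set.mem_image_of_mem ν hu
      have Wν : IsWitness cst cst' ν (oplusG s₀ t₀) (oplusG q z) := by
        refine ⟨⟨hmapsν, hinjν, himg.symm.subset⟩, hνc, ?_⟩
        intro i r tup hc
        cases r with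
        | inl r =>
          show tup ∈ (s₀ i).rel r ↔ (fun j => ν (tup j)) ∈ (q i).rel r
          constructor
          · intro h
            exact ⟨tup, h, rfl⟩
          · rintro ⟨w, hw, hww⟩
            have hwt : w = tup := by
              funext j
              exact hinjν (hsub_s (mem_adomF hw j)) (hc j) (congrFun hww j)
            rwa [← hwt]
        | inr r =>
          show tup ∈ (t₀ i).rel r ↔ (fun j => ν (tup j)) ∈ (z i).rel r
          have hbase := hκ.2.2 i (Sum.inr r) tup hc
          constructor
          · intro h
            have h2 := hbase.1 h
            have hcc : ∀ j, κ (tup j) ∈ adomF c ∪ Set.range cst' :=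
              fun j => Or.inl (hadomt₀ _ (mem_adomF h j))
            have h3 := (hθ.2.2 i r (fun j => κ (tup j)) hcc).1 h2
            have he : (fun j => ν (tup j)) = fun j => θ (κ (tup j)) := by
              funext j
              exact hν1 _ (hcc j)
            rwa [he]
          · intro h
            have hB : ∀ j, κ (tup j) ∈ B₁ := by
              intro j
              by_contra hnot
              have h1 : ν (tup j) = g (tup j) := hν2 _ hnot
              have h2 : ν (tup j) ∈ adomF z := mem_adomF h j
              exact hg2 (tup j) ⟨hc j, hnot⟩ (by rw [← h1]; exact Or.inl h2)
            have he : (fun j => ν (tup j)) = fun j => θ (κ (tup j)) := by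
              funext j
              exact hν1 _ (hB j)
            rw [he] at h
            exact hbase.2 ((hθ.2.2 i r (fun j => κ (tup j)) hB).2 h)
      have hνs : IsWitness cst cst' ν s₀ q := witness_fst Wν
      obtain ⟨θb, hθb⟩ := witness_transfer hκs hνs
      have hqS : q ∈ M'.S := ih q θb hθb
      have hBfin : (adomF (oplusG b c) ∪ Set.range cst').Finite :=
        (adomF_finite _).union (Set.finite_range _)
      have hcard2 : (adomF (oplusG b c) ∪ Set.range cst').encard
          = (adomF (oplusG q z) ∪ Set.range cst').encard := by
        rw [← hκ.image_dom, ← himg, hκ.1.2.1.encard_image, hinjν.encard_image]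
      have hdisj2 : ∀ u ∈ actElems a₀ \ A₀,
          κ' u ∉ adomF (oplusG b c) ∪ Set.range cst' := by
        intro u hu hmem
        rw [← hκ.image_dom] at hmem
        obtain ⟨v, hv, he⟩ := hmem
        have hvu : κ' v = κ' u := by rw [hκag v hv]; exact he
        have : v = u := hκinj (Or.inl hv) (Or.inr hu.1) hvu
        exact hu.2 (this ▸ hv)
      obtain ⟨g₂, hg₂1, hg₂2⟩ := inj_avoid (E := actElems a₀ \ A₀)
        ((actElems_finite a₀).diff) κ'
        (hκinj.mono (fun u hu => Or.inr hu.1)) hdisj2 hBfin hcard2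
      set ν' : U → U' := fun u => if u ∈ A₀ then ν u else g₂ u with hν'def
      have hν'ag : ∀ u ∈ A₀, ν' u = ν u := fun u hu => if_pos hu
      have hν'inj : Set.InjOn ν' (A₀ ∪ actElems a₀) := by
        intro u hu v hv huv
        by_cases h1 : u ∈ A₀ <;> by_cases h2 : v ∈ A₀
        · rw [hν'ag u h1, hν'ag v h2] at huv
          exact hinjν h1 h2 huv
        · exfalso
          have hu' : ν' u ∈ adomF (oplusG q z) ∪ Set.range cst' := by
            rw [hν'ag u h1]; exact hmapsν u h1
          have hv' : ν' v ∉ adomF (oplusG q z) ∪ Set.range cst' := by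
            show (if v ∈ A₀ then ν v else g₂ v) ∉ _
            rw [if_neg h2]
            exact hg₂2 v ⟨hv.resolve_left h2, h2⟩
          rw [huv] at hu'
          exact hv' hu'
        · exfalso
          have hv' : ν' v ∈ adomF (oplusG q z) ∪ Set.range cst' := by
            rw [hν'ag v h2]; exact hmapsν v h2
          have hu' : ν' u ∉ adomF (oplusG q z) ∪ Set.range cst' := by
            show (if u ∈ A₀ then ν u else g₂ u) ∉ _
            rw [if_neg h1]
            exact hg₂2 u ⟨hu.resolve_left h1, h1⟩
          rw [huv] at hu'
          exact hu' hv'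
        · have e1 : ν' u = g₂ u := if_neg h1
          have e2 : ν' v = g₂ v := if_neg h2
          rw [e1, e2] at huv
          exact hg₂1 ⟨hu.resolve_left h1, h1⟩ ⟨hv.resolve_left h2, h2⟩ huv
      have hzτ : z ∈ M'.τ q (JAct.map ν' a₀) :=
        (habs.2.2 q z (JAct.map ν' a₀)).2
          ⟨s₀, hs₀, t₀, ht₀, a₀, htr₀, ν, Wν, ν', hν'ag, hν'inj, rfl⟩
      exact M'.tau_closed q hqS _ hzτ
  constructor
  · -- temporal uniformity
    intro s hs t ht s' hs' t' a hta ι hι ι' hag hinj hconst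
    obtain ⟨s₀, hs₀, t₀, ht₀, a₀, htr₀, κ, hκ, κ', hκag, hκinj, ha⟩ :=
      (habs.2.2 s t a).1 hta
    subst ha
    have hmapκ' : ∀ u ∈ adomF (oplusG s₀ t₀) ∪ Set.range cst ∪ actElems a₀,
        κ' u ∈ adomF (oplusG s t) ∪ Set.range cst' ∪ actElems (JAct.map κ' a₀) := by
      rintro u (hu | hu)
      · rw [hκag u hu]
        exact Or.inl (hκ.1.1 hu)
      · obtain ⟨i, j, rfl⟩ := hu
        exact Or.inr ⟨i, j, rfl⟩
    refine (habs.2.2 s' t' _).2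
      ⟨s₀, hs₀, t₀, ht₀, a₀, htr₀, ι ∘ κ, hκ.comp hι, ι' ∘ κ', ?_, ?_, ?_⟩
    · intro u hu
      show ι' (κ' u) = ι (κ u)
      rw [hκag u hu, hag _ (hκ.1.1 hu)]
    · intro u hu v hv huv
      exact hκinj hu hv (hinj (hmapκ' u hu) (hmapκ' v hv) huv)
    · rfl
  · -- epistemic uniformity
    intro s hs t ht s' hs' t' i hepi hiso
    obtain ⟨ι, hι⟩ := hiso
    have ht'S : t' ∈ M'.S := by
      have htr : Relation.ReflTransGen M'.Tr M'.s0 t := by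
        rw [hM'.2] at ht; exact ht
      exact closed t htr t' ι (witness_snd hι)
    refine ⟨hs', ht'S, ?_⟩
    apply Inst.ext'
    funext r
    have e1 : (s' i.succ).rel r = (fun tup => ι ∘ tup) '' ((s i.succ).rel r) :=
      hι.rel_image i.succ (Sum.inl r)
    have e2 : (t' i.succ).rel r = (fun tup => ι ∘ tup) '' ((t i.succ).rel r) :=
      hι.rel_image i.succ (Sum.inr r)
    rw [e1, e2, hepi.2.2]
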